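/- Let L be a finite lattice with minimum element 0 and maximum element 1, let μ denote its Möbius function and ζ the characteristic function of the relation ≤. Let x ∈ L and let x^⊥ denote the set of complements of x in L. Then μ(0,1) = Σ_{y,z ∈ x^⊥} μ(0,y) ζ(y,z) μ(z,1). -/

import Mathlib

open Finset

/-- The Möbius function of a finite partial order, as an integer-valued
function on pairs of elements. -/
noncomputable def latticeMu (L : Type*) [PartialOrder L] [Fintype L] (a b : L) : ℤ :=
  letI : DecidableEq L := Classical.decEq _
  letI : @DecidableRel L L (· < ·) := Classical.decRel _
  letI : @DecidableRel L L (· ≤ ·) := Classical.decRel _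
  letI := Fintype.toLocallyFiniteOrder (α := L)
  IncidenceAlgebra.mu ℤ a b

/-- The zeta function of a partial order: the characteristic function of `≤`. -/
noncomputable def latticeZeta (L : Type*) [PartialOrder L] (a b : L) : ℤ :=
  letI : @DecidableRel L L (· ≤ ·) := Classical.decRel _
  IncidenceAlgebra.zeta ℤ a b

open scoped Classical in
lemma latticeZeta_eq {L : Type*} [PartialOrder L] (a b : L) :
    latticeZeta L a b = if a ≤ b then 1 else 0 := by
  rw [latticeZeta]; simp [IncidenceAlgebra.zeta_apply]

open scoped Classical in
lemma muA {L : Type*} [Lattice L] [BoundedOrder L] [Fintype L] (w : L) :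
    ∑ y : L, (if y ≤ w then latticeMu L ⊥ y else 0) = if w = ⊥ then 1 else 0 := by
  letI : DecidableEq L := Classical.decEq _
  letI : @DecidableRel L L (· < ·) := Classical.decRel _
  letI : @DecidableRel L L (· ≤ ·) := Classical.decRel _
  letI := Fintype.toLocallyFiniteOrder (α := L)
  have h : ∀ a b : L, latticeMu L a b = IncidenceAlgebra.mu ℤ a b := fun _ _ => rfl
  have h2 : ∑ y : L, (if y ≤ w then latticeMu L ⊥ y else 0)
      = ∑ y ∈ Finset.Icc (⊥ : L) w, IncidenceAlgebra.mu ℤ (⊥ : L) y := by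
    rw [show Finset.Icc (⊥:L) w = Finset.univ.filter (fun y => y ≤ w) from by ext y; simp,
      Finset.sum_filter]
    refine Finset.sum_congr rfl fun y _ => ?_
    split_ifs <;> simp [h]
  rw [h2, IncidenceAlgebra.sum_Icc_mu_right]
  simp [eq_comm]

open scoped Classical in
lemma muB {L : Type*} [Lattice L] [BoundedOrder L] [Fintype L] (w : L) :
    ∑ c : L, (if w ≤ c then latticeMu L c ⊤ else 0) = if w = ⊤ then 1 else 0 := by
  letI : DecidableEq L := Classical.decEq _
  letI : @DecidableRel L L (· < ·) := Classical.decRel _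
  letI : @DecidableRel L L (· ≤ ·) := Classical.decRel _
  letI := Fintype.toLocallyFiniteOrder (α := L)
  have h : ∀ a b : L, latticeMu L a b = IncidenceAlgebra.mu ℤ a b := fun _ _ => rfl
  have h2 : ∑ c : L, (if w ≤ c then latticeMu L c ⊤ else 0)
      = ∑ c ∈ Finset.Icc w (⊤ : L), IncidenceAlgebra.mu ℤ c (⊤ : L) := by
    rw [show Finset.Icc w (⊤:L) = Finset.univ.filter (fun c => w ≤ c) from by ext y; simp,
      Finset.sum_filter]
    refine Finset.sum_congr rfl fun y _ => ?_
    split_ifs <;> simp [h]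
  rw [h2, IncidenceAlgebra.sum_Icc_mu_left]

open scoped Classical in
lemma crapo_aux {L : Type*} [Lattice L] [BoundedOrder L] [Fintype L]
    (x : L) (μ : L → L → ℤ)
    (hA : ∀ w : L, ∑ y : L, (if y ≤ w then μ ⊥ y else 0) = if w = ⊥ then 1 else 0)
    (hB : ∀ w : L, ∑ c : L, (if w ≤ c then μ c ⊤ else 0) = if w = ⊤ then 1 else 0) :
    (∑ y : L, ∑ z : L, (if x ⊓ y = ⊥ ∧ x ⊔ y = ⊤ then 1 else 0)
        * ((if x ⊓ z = ⊥ ∧ x ⊔ z = ⊤ then 1 else 0)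
        * (μ ⊥ y * (if y ≤ z then 1 else 0) * μ z ⊤))) = μ ⊥ ⊤ := by
  obtain ⟨N, hN⟩ : ∃ N : L → ℤ, ∀ a : L,
      N a = ∑ z : L, (if a ≤ z ∧ x ⊔ z = ⊤ then μ z ⊤ else 0) := ⟨_, fun _ => rfl⟩
  -- key lemma E2
  have key2 : ∀ z : L, (∑ y : L, if y ≤ z ∧ x ⊔ y = ⊤ then μ ⊥ y else 0)
      = ∑ c : L, (if x ≤ c ∧ z ⊓ c = ⊥ then μ c ⊤ else 0) := by
    intro z
    symm
    calc ∑ c : L, (if x ≤ c ∧ z ⊓ c = ⊥ then μ c ⊤ else 0)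
        = ∑ c : L, (if x ≤ c then μ c ⊤ * (if z ⊓ c = ⊥ then 1 else 0) else 0) := by
          refine Finset.sum_congr rfl fun c _ => ?_
          by_cases h1 : x ≤ c <;> by_cases h2 : z ⊓ c = ⊥ <;> simp [h1, h2]
      _ = ∑ c : L, (if x ≤ c then μ c ⊤ * (∑ y : L, if y ≤ z ⊓ c then μ ⊥ y else 0) else 0) := by
          refine Finset.sum_congr rfl fun c _ => ?_
          rw [hA]
      _ = ∑ c : L, ∑ y : L, (if x ≤ c ∧ (y ≤ z ∧ y ≤ c) then μ c ⊤ * μ ⊥ y else 0) := by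
          refine Finset.sum_congr rfl fun c _ => ?_
          by_cases h : x ≤ c
          · rw [if_pos h, Finset.mul_sum]
            refine Finset.sum_congr rfl fun y _ => ?_
            rw [le_inf_iff]
            by_cases h2 : y ≤ z ∧ y ≤ c <;> simp [h, h2]
          · rw [if_neg h]
            exact (Finset.sum_eq_zero fun y _ => by simp [h]).symm
      _ = ∑ y : L, ∑ c : L, (if x ≤ c ∧ (y ≤ z ∧ y ≤ c) then μ c ⊤ * μ ⊥ y else 0) :=
          Finset.sum_comm
      _ = ∑ y : L, (if y ≤ z then μ ⊥ y * (∑ c : L, if x ⊔ y ≤ c then μ c ⊤ else 0) else 0) := by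
          refine Finset.sum_congr rfl fun y _ => ?_
          by_cases h : y ≤ z
          · rw [if_pos h, Finset.mul_sum]
            refine Finset.sum_congr rfl fun c _ => ?_
            rw [sup_le_iff]
            by_cases h2 : x ≤ c ∧ y ≤ c <;> simp [h, h2, mul_comm]
          · rw [if_neg h]
            exact Finset.sum_eq_zero fun c _ => by simp [h]
      _ = ∑ y : L, (if y ≤ z ∧ x ⊔ y = ⊤ then μ ⊥ y else 0) := by
          refine Finset.sum_congr rfl fun y _ => ?_
          rw [hB]
          by_cases h : y ≤ z <;> by_cases h2 : x ⊔ y = ⊤ <;> simp [h, h2]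
  -- key lemma E5
  have key5 : ∀ c : L, (∑ z : L, if x ⊔ z = ⊤ ∧ z ⊓ c = ⊥ then μ z ⊤ else 0)
      = ∑ a : L, (if a ≤ c then μ ⊥ a * N a else 0) := by
    intro c
    calc ∑ z : L, (if x ⊔ z = ⊤ ∧ z ⊓ c = ⊥ then μ z ⊤ else 0)
        = ∑ z : L, (if x ⊔ z = ⊤ then μ z ⊤ * (if z ⊓ c = ⊥ then 1 else 0) else 0) := by
          refine Finset.sum_congr rfl fun z _ => ?_
          by_cases h1 : x ⊔ z = ⊤ <;> by_cases h2 : z ⊓ c = ⊥ <;> simp [h1, h2]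
      _ = ∑ z : L, (if x ⊔ z = ⊤ then μ z ⊤ * (∑ a : L, if a ≤ z ⊓ c then μ ⊥ a else 0) else 0) := by
          refine Finset.sum_congr rfl fun z _ => ?_
          rw [hA]
      _ = ∑ z : L, ∑ a : L, (if x ⊔ z = ⊤ ∧ (a ≤ z ∧ a ≤ c) then μ z ⊤ * μ ⊥ a else 0) := by
          refine Finset.sum_congr rfl fun z _ => ?_
          by_cases h : x ⊔ z = ⊤
          · rw [if_pos h, Finset.mul_sum]
            refine Finset.sum_congr rfl fun a _ => ?_
            rw [le_inf_iff]
            by_cases h2 : a ≤ z ∧ a ≤ c <;> simp [h, h2]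
          · rw [if_neg h]
            exact (Finset.sum_eq_zero fun a _ => by simp [h]).symm
      _ = ∑ a : L, ∑ z : L, (if x ⊔ z = ⊤ ∧ (a ≤ z ∧ a ≤ c) then μ z ⊤ * μ ⊥ a else 0) :=
          Finset.sum_comm
      _ = ∑ a : L, (if a ≤ c then μ ⊥ a * N a else 0) := by
          refine Finset.sum_congr rfl fun a _ => ?_
          rw [hN]
          by_cases h : a ≤ c
          · rw [if_pos h, Finset.mul_sum]
            refine Finset.sum_congr rfl fun z _ => ?_
            by_cases h2 : x ⊔ z = ⊤ <;> by_cases h3 : a ≤ z <;> simp [h, h2, h3, mul_comm]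
          · rw [if_neg h]
            exact Finset.sum_eq_zero fun z _ => by simp [h]
  -- main chain
  calc (∑ y : L, ∑ z : L, (if x ⊓ y = ⊥ ∧ x ⊔ y = ⊤ then 1 else 0)
        * ((if x ⊓ z = ⊥ ∧ x ⊔ z = ⊤ then 1 else 0)
        * (μ ⊥ y * (if y ≤ z then 1 else 0) * μ z ⊤)))
      = ∑ z : L, ∑ y : L, (if x ⊓ y = ⊥ ∧ x ⊔ y = ⊤ then 1 else 0)
        * ((if x ⊓ z = ⊥ ∧ x ⊔ z = ⊤ then 1 else 0)
        * (μ ⊥ y * (if y ≤ z then 1 else 0) * μ z ⊤)) := by exact Finset.sum_comm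
    _ = ∑ z : L, (if x ⊓ z = ⊥ ∧ x ⊔ z = ⊤ then
          μ z ⊤ * (∑ y : L, if y ≤ z ∧ x ⊔ y = ⊤ then μ ⊥ y else 0) else 0) := by
        refine Finset.sum_congr rfl fun z _ => ?_
        by_cases hz : x ⊓ z = ⊥ ∧ x ⊔ z = ⊤
        · rw [show (if x ⊓ z = ⊥ ∧ x ⊔ z = ⊤ then
              μ z ⊤ * (∑ y : L, if y ≤ z ∧ x ⊔ y = ⊤ then μ ⊥ y else 0) else 0)
              = μ z ⊤ * (∑ y : L, if y ≤ z ∧ x ⊔ y = ⊤ then μ ⊥ y else 0) from if_pos hz,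
            Finset.mul_sum]
          refine Finset.sum_congr rfl fun y _ => ?_
          by_cases hyz : y ≤ z
          · have hxy0 : x ⊓ y = ⊥ := by
              have h3 : x ⊓ y ≤ x ⊓ z := inf_le_inf_left x hyz
              rw [hz.1] at h3
              exact le_bot_iff.1 h3
            by_cases hxy : x ⊔ y = ⊤
            · simp [hxy0, hxy, hyz, hz, mul_comm]
            · simp [hxy, hyz, hz, hxy0]
          · simp [hyz]
        · simp only [hz, if_false]
          refine Finset.sum_eq_zero fun y _ => ?_
          simp [hz]
    _ = ∑ z : L, (if x ⊓ z = ⊥ ∧ x ⊔ z = ⊤ then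
          μ z ⊤ * (∑ c : L, if x ≤ c ∧ z ⊓ c = ⊥ then μ c ⊤ else 0) else 0) := by
        refine Finset.sum_congr rfl fun z _ => ?_
        rw [key2]
    _ = ∑ z : L, ∑ c : L, (if (x ⊔ z = ⊤ ∧ z ⊓ c = ⊥) ∧ x ≤ c then μ z ⊤ * μ c ⊤ else 0) := by
        refine Finset.sum_congr rfl fun z _ => ?_
        by_cases hz : x ⊓ z = ⊥ ∧ x ⊔ z = ⊤
        · rw [if_pos hz, Finset.mul_sum]
          refine Finset.sum_congr rfl fun c _ => ?_
          by_cases h2 : x ≤ c ∧ z ⊓ c = ⊥ <;> simp [hz, h2, and_comm, mul_comm]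
        · rw [if_neg hz]
          refine (Finset.sum_eq_zero fun c _ => ?_).symm
          by_cases hxc : x ≤ c
          · by_cases hzc : z ⊓ c = ⊥
            · have hxz : x ⊓ z = ⊥ := by
                have h3 : x ⊓ z ≤ c ⊓ z := inf_le_inf_right z hxc
                rw [inf_comm c z, hzc] at h3
                exact le_bot_iff.1 h3
              by_cases hxzt : x ⊔ z = ⊤
              · exact absurd ⟨hxz, hxzt⟩ hz
              · simp [hxzt]
            · simp [hzc]
          · simp [hxc]
    _ = ∑ c : L, ∑ z : L, (if (x ⊔ z = ⊤ ∧ z ⊓ c = ⊥) ∧ x ≤ c then μ z ⊤ * μ c ⊤ else 0) :=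
        Finset.sum_comm
    _ = ∑ c : L, (if x ≤ c then
          μ c ⊤ * (∑ z : L, if x ⊔ z = ⊤ ∧ z ⊓ c = ⊥ then μ z ⊤ else 0) else 0) := by
        refine Finset.sum_congr rfl fun c _ => ?_
        by_cases h : x ≤ c
        · rw [if_pos h, Finset.mul_sum]
          refine Finset.sum_congr rfl fun z _ => ?_
          by_cases h2 : x ⊔ z = ⊤ ∧ z ⊓ c = ⊥ <;> simp [h, h2, mul_comm]
        · rw [if_neg h]
          exact Finset.sum_eq_zero fun z _ => by simp [h]
    _ = ∑ c : L, (if x ≤ c then μ c ⊤ * (∑ a : L, if a ≤ c then μ ⊥ a * N a else 0) else 0) := by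
        refine Finset.sum_congr rfl fun c _ => ?_
        rw [key5]
    _ = ∑ c : L, ∑ a : L, (if x ≤ c ∧ a ≤ c then μ c ⊤ * (μ ⊥ a * N a) else 0) := by
        refine Finset.sum_congr rfl fun c _ => ?_
        by_cases h : x ≤ c
        · rw [if_pos h, Finset.mul_sum]
          refine Finset.sum_congr rfl fun a _ => ?_
          by_cases h2 : a ≤ c <;> simp [h, h2]
        · rw [if_neg h]
          exact (Finset.sum_eq_zero fun a _ => by simp [h]).symm
    _ = ∑ a : L, ∑ c : L, (if x ≤ c ∧ a ≤ c then μ c ⊤ * (μ ⊥ a * N a) else 0) :=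
        Finset.sum_comm
    _ = ∑ a : L, (μ ⊥ a * N a) * (∑ c : L, if x ⊔ a ≤ c then μ c ⊤ else 0) := by
        refine Finset.sum_congr rfl fun a _ => ?_
        rw [Finset.mul_sum]
        refine Finset.sum_congr rfl fun c _ => ?_
        rw [sup_le_iff]
        by_cases h2 : x ≤ c ∧ a ≤ c <;> simp [h2, mul_comm]
    _ = ∑ a : L, (μ ⊥ a * N a) * (if x ⊔ a = ⊤ then 1 else 0) := by
        refine Finset.sum_congr rfl fun a _ => ?_
        rw [hB]
    _ = ∑ a : L, (if a = ⊤ then μ ⊥ a else 0) := by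
        refine Finset.sum_congr rfl fun a _ => ?_
        by_cases ha : x ⊔ a = ⊤
        · have hNa : N a = if a = ⊤ then 1 else 0 := by
            rw [hN]
            rw [show (∑ z : L, if a ≤ z ∧ x ⊔ z = ⊤ then μ z ⊤ else 0)
                = ∑ z : L, (if a ≤ z then μ z ⊤ else 0) from
              Finset.sum_congr rfl fun z _ => by
                by_cases haz : a ≤ z
                · have h4 : x ⊔ z = ⊤ := by
                    rw [← top_le_iff, ← ha]
                    exact sup_le_sup_left haz x
                  simp [haz, h4]
                · simp [haz]]
            exact hB a
          rw [hNa]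
          by_cases h : a = ⊤ <;> simp [h, ha]
        · have h : ¬ a = ⊤ := fun h => ha (by simp [h])
          simp [ha, h]
    _ = μ ⊥ ⊤ := by simp

open scoped Classical in
/-- Crapo's Complement Theorem. -/
theorem crapo_complement_theorem {L : Type*} [Lattice L] [BoundedOrder L] [Fintype L]
    (x : L) :
    latticeMu L ⊥ ⊤ =
      ∑ y ∈ Finset.univ.filter (fun y : L => x ⊓ y = ⊥ ∧ x ⊔ y = ⊤),
        ∑ z ∈ Finset.univ.filter (fun z : L => x ⊓ z = ⊥ ∧ x ⊔ z = ⊤),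
          latticeMu L ⊥ y * latticeZeta L y z * latticeMu L z ⊤ := by
  calc latticeMu L ⊥ ⊤
      = ∑ y : L, ∑ z : L, (if x ⊓ y = ⊥ ∧ x ⊔ y = ⊤ then 1 else 0)
          * ((if x ⊓ z = ⊥ ∧ x ⊔ z = ⊤ then 1 else 0)
          * (latticeMu L ⊥ y * (if y ≤ z then 1 else 0) * latticeMu L z ⊤)) :=
        (crapo_aux x (latticeMu L) (fun w => muA w) (fun w => muB w)).symm
    _ = ∑ y ∈ Finset.univ.filter (fun y : L => x ⊓ y = ⊥ ∧ x ⊔ y = ⊤),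
        ∑ z ∈ Finset.univ.filter (fun z : L => x ⊓ z = ⊥ ∧ x ⊔ z = ⊤),
          latticeMu L ⊥ y * latticeZeta L y z * latticeMu L z ⊤ := by
        rw [Finset.sum_filter]
        refine Finset.sum_congr rfl fun y _ => ?_
        rw [Finset.sum_filter]
        by_cases hy : x ⊓ y = ⊥ ∧ x ⊔ y = ⊤
        · simp only [hy, and_self, if_true]
          refine Finset.sum_congr rfl fun z _ => ?_
          by_cases hz : x ⊓ z = ⊥ ∧ x ⊔ z = ⊤
          · simp [hz, latticeZeta_eq]
          · simp [hz]
        · simp [hy]
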